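/- Let A ∈ ℝ^{n×n}, B ∈ ℝ^{n×q}, and let M := [[−(A+A^T), B],[B^T, 0]] be the associated saddle-point matrix. Suppose X ∈ ℝ^{n×n} is nonsingular, Y ∈ ℝ^{q×n}, and M [X;Y] = [X;Y] Λ for a diagonal positive definite matrix Λ ∈ ℝ^{n×n}. Then B^T X = Y Λ, and consequently the feedback matrix K := Y X^{-1} satisfies rank(K) = rank(Y) = rank(B); in particular K = B^T X Λ^{-1} X^{-1}, i.e. K = B^T W for the nonsingular matrix W = X Λ^{-1} X^{-1}. -/

import Mathlib

open Matrix

/-- if `X` is nonsingular and `M [X;Y] = [X;Y] Λ` with `Λ = diagonal d`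
positive definite, then `Bᵀ X = Y Λ`, `K = Y X⁻¹` satisfies
`rank K = rank Y = rank B`, and `K = Bᵀ W` with `W = X Λ⁻¹ X⁻¹` nonsingular. -/
theorem feedback_rank_and_factorization {n q : ℕ}
    (A : Matrix (Fin n) (Fin n) ℝ) (B : Matrix (Fin n) (Fin q) ℝ)
    (X : Matrix (Fin n) (Fin n) ℝ) (hX : IsUnit X.det)
    (Y : Matrix (Fin q) (Fin n) ℝ)
    (d : Fin n → ℝ) (hd : ∀ i, 0 < d i)
    (heig : Matrix.fromBlocks (-(A + Aᵀ)) B Bᵀ 0 * Matrix.fromRows X Y =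
      Matrix.fromRows X Y * Matrix.diagonal d) :
    Bᵀ * X = Y * Matrix.diagonal d ∧
      (Y * X⁻¹).rank = Y.rank ∧ Y.rank = B.rank ∧
      Y * X⁻¹ = Bᵀ * (X * (Matrix.diagonal d)⁻¹ * X⁻¹) ∧
      IsUnit (X * (Matrix.diagonal d)⁻¹ * X⁻¹).det := by
  have hΛ : IsUnit (Matrix.diagonal d).det := by
    rw [Matrix.det_diagonal]
    exact isUnit_iff_ne_zero.mpr (Finset.prod_ne_zero_iff.mpr fun i _ => (hd i).ne')
  have hBX : Bᵀ * X = Y * Matrix.diagonal d := by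
    rw [Matrix.fromBlocks_mul_fromRows, Matrix.fromRows_mul,
      Matrix.fromRows_ext_iff] at heig
    simpa using heig.2
  have hY : Y = Bᵀ * (X * (Matrix.diagonal d)⁻¹) := by
    rw [← Matrix.mul_assoc, hBX, Matrix.mul_assoc,
      Matrix.mul_nonsing_inv _ hΛ, Matrix.mul_one]
  have hXΛ : IsUnit (X * (Matrix.diagonal d)⁻¹).det := by
    rw [Matrix.det_mul, Matrix.det_nonsing_inv]
    exact hX.mul hΛ.ringInverse
  refine ⟨hBX, ?_, ?_, ?_, ?_⟩
  · exact Matrix.rank_mul_eq_left_of_isUnit_det _ Y (Matrix.isUnit_nonsing_inv_det X hX)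
  · rw [hY, Matrix.rank_mul_eq_left_of_isUnit_det _ _ hXΛ, Matrix.rank_transpose]
  · rw [hY, Matrix.mul_assoc]
  · rw [Matrix.det_mul, Matrix.det_mul, Matrix.det_nonsing_inv X, Matrix.det_nonsing_inv]
    exact (hX.mul hΛ.ringInverse).mul hX.ringInverse
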